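/- For |t| < 1 and |q| < 1, the generating function of the Rogers–Szegő polynomials satisfies ∑_{k≥0} t^k s_k(x|q)/(q;q)_k = 1/((tx;q)_∞ (t;q)_∞), where s_n(x|q) = ∑_{k=0}^n [n choose k]_q x^k. -/

import Mathlib

/-- The Gaussian (q-)binomial coefficient, defined via the q-Pascal rule. -/
def gaussBinom (q : ℂ) : ℕ → ℕ → ℂ
  | _, 0 => 1
  | 0, _ + 1 => 0
  | n + 1, k + 1 => gaussBinom q n k + q ^ (k + 1) * gaussBinom q n (k + 1)

/-- The Rogers–Szegő polynomial `s_n(x|q) = ∑_{k=0}^n [n choose k]_q x^k`. -/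
noncomputable def rogersSzego (q x : ℂ) (n : ℕ) : ℂ :=
  ∑ k ∈ Finset.range (n + 1), gaussBinom q n k * x ^ k

open Finset Filter Topology

noncomputable def qp (q : ℂ) (n : ℕ) : ℂ := ∏ j ∈ Finset.range n, (1 - q ^ (j + 1))

lemma qp_succ (q : ℂ) (n : ℕ) : qp q (n+1) = qp q n * (1 - q ^ (n+1)) :=
  Finset.prod_range_succ _ _

lemma gauss_eq_zero (q : ℂ) : ∀ n k, n < k → gaussBinom q n k = 0
  | 0, _+1, _ => rfl
  | n+1, k+1, h => by
    show gaussBinom q n k + q ^ (k + 1) * gaussBinom q n (k + 1) = 0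
    rw [gauss_eq_zero q n k (by omega), gauss_eq_zero q n (k+1) (by omega)]
    ring

lemma gauss_diag (q : ℂ) : ∀ n, gaussBinom q n n = 1
  | 0 => rfl
  | n+1 => by
    show gaussBinom q n n + q ^ (n + 1) * gaussBinom q n (n + 1) = 1
    rw [gauss_diag q n, gauss_eq_zero q n (n+1) (by omega)]
    ring

lemma gauss_mul (q : ℂ) : ∀ n k, k ≤ n → gaussBinom q n k * (qp q k * qp q (n - k)) = qp q n
  | n, 0, _ => by simp [gaussBinom, qp]
  | 0, k+1, h => by omega
  | n+1, k+1, h => by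
    rcases Nat.lt_or_ge k n with hk | hk
    · obtain ⟨m, rfl⟩ : ∃ m, n = k + 1 + m := ⟨n - (k+1), by omega⟩
      have h1 := gauss_mul q (k+1+m) k (by omega)
      have h2 := gauss_mul q (k+1+m) (k+1) (by omega)
      have e1 : k + 1 + m - k = m + 1 := by omega
      have e2 : k + 1 + m - (k+1) = m := by omega
      have e3 : k + 1 + m + 1 - (k + 1) = m + 1 := by omega
      rw [e1, qp_succ] at h1
      rw [e2, qp_succ q k] at h2
      show (gaussBinom q (k+1+m) k + q ^ (k + 1) * gaussBinom q (k+1+m) (k + 1)) *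
        (qp q (k+1) * qp q (k+1+m+1 - (k+1))) = qp q (k+1+m+1)
      rw [e3, qp_succ q (k+1+m), qp_succ q k, qp_succ q m]
      have epow : q ^ (k + 1 + m + 1) = q ^ (k+1) * q ^ (m+1) := by ring
      rw [epow]
      linear_combination (1 - q^(k+1)) * h1 + q^(k+1) * (1 - q^(m+1)) * h2
    · obtain rfl : k = n := by omega
      show (gaussBinom q k k + q ^ (k + 1) * gaussBinom q k (k + 1)) *
        (qp q (k+1) * qp q (k+1 - (k+1))) = qp q (k+1)
      rw [gauss_diag, gauss_eq_zero q k (k+1) (by omega)]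
      simp [qp]

lemma one_sub_ne {q : ℂ} (h : ‖q‖ < 1) : (1 : ℂ) - q ≠ 0 := by
  intro hc
  rw [sub_eq_zero] at hc
  rw [← hc] at h
  simp at h

lemma qp_ne_zero {q : ℂ} (hq : ‖q‖ < 1) (n : ℕ) : qp q n ≠ 0 := by
  apply Finset.prod_ne_zero_iff.mpr
  intro j _
  apply one_sub_ne
  rw [norm_pow]
  exact pow_lt_one₀ (norm_nonneg q) hq (by omega)

lemma factor_norm_lt {q c : ℂ} (hq : ‖q‖ < 1) (hc : ‖c‖ < 1) (j : ℕ) :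
    ‖c * q ^ j‖ < 1 := by
  rw [norm_mul, norm_pow]
  calc ‖c‖ * ‖q‖ ^ j ≤ ‖c‖ * 1 := by
        apply mul_le_mul_of_nonneg_left _ (norm_nonneg c)
        exact pow_le_one₀ (norm_nonneg q) hq.le
    _ < 1 := by simpa using hc

lemma log_summable {q c : ℂ} (hq : ‖q‖ < 1) (hc : ‖c‖ < 1) :
    Summable fun j : ℕ => Complex.log (1 - c * q ^ j) := by
  apply Summable.of_norm_bounded
    (g := fun j => (‖c‖ * (‖c‖ / (2 * (1 - ‖c‖)) + 1)) * ‖q‖ ^ j)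
    ((summable_geometric_of_lt_one (norm_nonneg q) hq).mul_left _)
  intro j
  have hn : ‖-(c * q ^ j)‖ < 1 := by rw [norm_neg]; exact factor_norm_lt hq hc j
  have h1 : (1 : ℂ) - c * q ^ j = 1 + -(c * q ^ j) := by ring
  rw [h1]
  refine (Complex.norm_log_one_add_le hn).trans ?_
  rw [norm_neg, norm_mul, norm_pow]
  set u := ‖c‖ * ‖q‖ ^ j with hu
  have hqj : ‖q‖ ^ j ≤ 1 := pow_le_one₀ (norm_nonneg q) hq.le
  have hu0 : 0 ≤ u := by positivity
  have huc : u ≤ ‖c‖ := by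
    calc u ≤ ‖c‖ * 1 := mul_le_mul_of_nonneg_left hqj (norm_nonneg c)
      _ = ‖c‖ := by ring
  have hden : 0 < 2 * (1 - u) := by nlinarith
  have hden2 : 0 < 2 * (1 - ‖c‖) := by nlinarith [norm_nonneg c]
  set B := ‖c‖ / (2 * (1 - ‖c‖)) with hB
  have hBc : B * (2 * (1 - ‖c‖)) = ‖c‖ := div_mul_cancel₀ _ hden2.ne'
  have hB0 : 0 ≤ B := div_nonneg (norm_nonneg c) hden2.le
  have key : u ^ 2 * (1 - u)⁻¹ / 2 ≤ u * B := by
    rw [div_le_iff₀ (by norm_num : (0:ℝ) < 2), mul_comm (u^2),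
      inv_mul_le_iff₀ (by linarith : (0:ℝ) < 1 - u)]
    nlinarith [mul_nonneg hu0 (sub_nonneg.2 huc), mul_nonneg (mul_nonneg hu0 hB0) (sub_nonneg.2 huc)]
  calc u ^ 2 * (1 - u)⁻¹ / 2 + u ≤ u * B + u := by linarith
    _ = (B + 1) * u := by ring
    _ = ‖c‖ * (B + 1) * ‖q‖ ^ j := by rw [hu]; ring

lemma prod_facts {q c : ℂ} (hq : ‖q‖ < 1) (hc : ‖c‖ < 1) :
    Multipliable (fun j : ℕ => 1 - c * q ^ j) ∧ (∏' j : ℕ, (1 - c * q ^ j)) ≠ 0 := by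
  have hfn : ∀ (_ : Unit) (j : ℕ), (fun (j : ℕ) (_ : Unit) => 1 - c * q ^ j) j () ≠ 0 :=
    fun _ j => one_sub_ne (factor_norm_lt hq hc j)
  have hf : ∀ (_ : Unit), Summable fun j : ℕ =>
      Complex.log ((fun (j : ℕ) (_ : Unit) => 1 - c * q ^ j) j ()) :=
    fun _ => log_summable hq hc
  constructor
  · exact Complex.multipliable_of_summable_log (hf ())
  · have := Complex.cexp_tsum_eq_tprod (f := fun j => 1 - c * q ^ j) (hfn ()) (hf ())
    rw [← this]
    exact Complex.exp_ne_zero _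

lemma qp_eq_prod (q : ℂ) (n : ℕ) : qp q n = ∏ j ∈ Finset.range n, (1 - q * q ^ j) := by
  unfold qp
  refine Finset.prod_congr rfl fun j _ => ?_
  rw [pow_succ, mul_comm]

lemma qp_tendsto {q : ℂ} (hq : ‖q‖ < 1) :
    Tendsto (qp q) atTop (𝓝 (∏' j : ℕ, (1 - q * q ^ j))) := by
  have h := (prod_facts hq hq).1
  have := h.hasProd.tendsto_prod_nat
  simpa [← qp_eq_prod] using this

lemma qp_inv_bound {q : ℂ} (hq : ‖q‖ < 1) :
    ∃ C : ℝ, 0 < C ∧ ∀ n, ‖(qp q n)⁻¹‖ ≤ C := by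
  have hL := (prod_facts hq hq).2
  have h : Tendsto (fun n => ‖(qp q n)⁻¹‖) atTop
      (𝓝 ‖(∏' j : ℕ, (1 - q * q ^ j))⁻¹‖) :=
    (((qp_tendsto hq).inv₀ hL).norm)
  obtain ⟨C, hC⟩ := h.bddAbove_range
  refine ⟨max C 1, by positivity, fun n => ?_⟩
  exact le_max_of_le_left (hC (Set.mem_range_self n))

lemma euler_summable_norm {q : ℂ} (hq : ‖q‖ < 1) {c : ℂ} (hc : ‖c‖ < 1) :
    Summable fun n : ℕ => ‖c ^ n / qp q n‖ := by
  obtain ⟨C, hC0, hC⟩ := qp_inv_bound hq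
  apply Summable.of_nonneg_of_le (fun n => norm_nonneg _)
    (fun n => ?_) (((summable_geometric_of_lt_one (norm_nonneg c) hc)).mul_right C)
  rw [div_eq_mul_inv, norm_mul, norm_pow]
  exact mul_le_mul_of_nonneg_left (hC n) (by positivity)

lemma euler_funeq {q : ℂ} (hq : ‖q‖ < 1) {c : ℂ} (hc : ‖c‖ < 1) :
    (1 - c) * (∑' n : ℕ, c ^ n / qp q n) = ∑' n : ℕ, (q * c) ^ n / qp q n := by
  have hqc : ‖q * c‖ < 1 := by
    rw [norm_mul]
    nlinarith [norm_nonneg q, norm_nonneg c]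
  set f : ℕ → ℂ := fun n => c ^ n / qp q n with hf
  set g : ℕ → ℂ := fun n => (q * c) ^ n / qp q n with hg
  have hsf : Summable f := (euler_summable_norm hq hc).of_norm
  have hsg : Summable g := (euler_summable_norm hq hqc).of_norm
  have hsf1 : Summable fun n => f (n + 1) := (summable_nat_add_iff 1).2 hsf
  have hscf : Summable fun n => c * f n := hsf.mul_left c
  have key : ∀ n : ℕ, f (n + 1) - c * f n = g (n + 1) := by
    intro n
    simp only [hf, hg]
    have h1 : qp q (n + 1) = qp q n * (1 - q ^ (n+1)) := qp_succ q n
    have h2 : qp q n ≠ 0 := qp_ne_zero hq n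
    have h3 : (1 : ℂ) - q ^ (n+1) ≠ 0 := by
      apply one_sub_ne; rw [norm_pow]; exact pow_lt_one₀ (norm_nonneg q) hq (by omega)
    rw [h1]
    field_simp
    ring
  have e1 : (∑' n, f n) = 1 + ∑' n, f (n + 1) := by
    rw [Summable.tsum_eq_zero_add hsf]
    simp [hf, qp]
  have e2 : (∑' n, g n) = 1 + ∑' n, g (n + 1) := by
    rw [Summable.tsum_eq_zero_add hsg]
    simp [hg, qp]
  have e3 : (∑' n, c * f n) = c * ∑' n, f n := tsum_mul_left
  calc (1 - c) * (∑' n, f n) = (∑' n, f n) - (∑' n, c * f n) := by rw [e3]; ring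
    _ = (1 + ∑' n, f (n + 1)) - (∑' n, c * f n) := by rw [e1]
    _ = 1 + ((∑' n, f (n + 1)) - (∑' n, c * f n)) := by ring
    _ = 1 + ∑' n, (f (n + 1) - c * f n) := by rw [Summable.tsum_sub hsf1 hscf]
    _ = 1 + ∑' n, g (n + 1) := by rw [tsum_congr key]
    _ = ∑' n, g n := e2.symm

lemma pow_mul_norm_lt {q c : ℂ} (hq : ‖q‖ < 1) (hc : ‖c‖ < 1) (n : ℕ) :
    ‖q ^ n * c‖ < 1 := by
  rw [norm_mul, norm_pow]
  calc ‖q‖ ^ n * ‖c‖ ≤ 1 * ‖c‖ :=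
        mul_le_mul_of_nonneg_right (pow_le_one₀ (norm_nonneg q) hq.le) (norm_nonneg c)
    _ < 1 := by simpa using hc

lemma euler_prod_eq {q c : ℂ} (hq : ‖q‖ < 1) (hc : ‖c‖ < 1) (n : ℕ) :
    (∑' k : ℕ, c ^ k / qp q k) * ∏ j ∈ Finset.range n, (1 - c * q ^ j) =
      ∑' k : ℕ, (q ^ n * c) ^ k / qp q k := by
  induction n with
  | zero => simp
  | succ n ih =>
      rw [Finset.prod_range_succ, ← mul_assoc, ih]
      have h := euler_funeq hq (pow_mul_norm_lt hq hc n)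
      have e : q * (q ^ n * c) = q ^ (n+1) * c := by ring
      rw [e] at h
      rw [← h]
      ring

lemma euler_tendsto_one {q c : ℂ} (hq : ‖q‖ < 1) (hc : ‖c‖ < 1) :
    Tendsto (fun n : ℕ => ∑' k : ℕ, (q ^ n * c) ^ k / qp q k) atTop (𝓝 1) := by
  obtain ⟨C, hC0, hC⟩ := qp_inv_bound hq
  rw [tendsto_iff_norm_sub_tendsto_zero]
  have hgeo : Summable fun k : ℕ => ‖c‖ ^ k * C :=
    (summable_geometric_of_lt_one (norm_nonneg c) hc).mul_right C
  have bound : ∀ n : ℕ, ‖(∑' k : ℕ, (q ^ n * c) ^ k / qp q k) - 1‖ ≤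
      ‖q‖ ^ n * (‖c‖ * C * (1 - ‖c‖)⁻¹) := by
    intro n
    have hs : ‖q ^ n * c‖ < 1 := pow_mul_norm_lt hq hc n
    set s := q ^ n * c with hsdef
    have hsum : Summable (fun k => s ^ k / qp q k) := (euler_summable_norm hq hs).of_norm
    have h0 : (∑' k : ℕ, s ^ k / qp q k) - 1 = ∑' k : ℕ, s ^ (k+1) / qp q (k+1) := by
      rw [Summable.tsum_eq_zero_add hsum]
      simp [qp]
    rw [h0]
    have hsn : ‖s‖ = ‖q‖ ^ n * ‖c‖ := by rw [hsdef, norm_mul, norm_pow]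
    have hsc : ‖s‖ ≤ ‖c‖ := by
      rw [hsn]
      calc ‖q‖ ^ n * ‖c‖ ≤ 1 * ‖c‖ :=
            mul_le_mul_of_nonneg_right (pow_le_one₀ (norm_nonneg q) hq.le) (norm_nonneg c)
        _ = ‖c‖ := one_mul _
    have hb : ∀ k : ℕ, ‖s ^ (k+1) / qp q (k+1)‖ ≤ (‖q‖ ^ n * ‖c‖ * C) * ‖c‖ ^ k := by
      intro k
      rw [div_eq_mul_inv, norm_mul, norm_pow]
      have h1 : ‖s‖ ^ (k+1) ≤ (‖q‖ ^ n * ‖c‖) * ‖c‖ ^ k := by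
        calc ‖s‖ ^ (k+1) = ‖s‖ * ‖s‖ ^ k := pow_succ' _ _
          _ ≤ ‖s‖ * ‖c‖ ^ k :=
              mul_le_mul_of_nonneg_left (pow_le_pow_left₀ (norm_nonneg s) hsc k) (norm_nonneg s)
          _ = (‖q‖ ^ n * ‖c‖) * ‖c‖ ^ k := by rw [hsn]
      calc ‖s‖ ^ (k+1) * ‖(qp q (k+1))⁻¹‖ ≤ ((‖q‖ ^ n * ‖c‖) * ‖c‖ ^ k) * C :=
            mul_le_mul h1 (hC _) (norm_nonneg _) (by positivity)
        _ = (‖q‖ ^ n * ‖c‖ * C) * ‖c‖ ^ k := by ring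
    have hg : HasSum (fun k : ℕ => (‖q‖ ^ n * ‖c‖ * C) * ‖c‖ ^ k)
        ((‖q‖ ^ n * ‖c‖ * C) * (1 - ‖c‖)⁻¹) :=
      (hasSum_geometric_of_lt_one (norm_nonneg c) hc).mul_left _
    calc ‖∑' k : ℕ, s ^ (k+1) / qp q (k+1)‖ ≤ (‖q‖ ^ n * ‖c‖ * C) * (1 - ‖c‖)⁻¹ :=
          tsum_of_norm_bounded hg hb
      _ = ‖q‖ ^ n * (‖c‖ * C * (1 - ‖c‖)⁻¹) := by ring
  apply squeeze_zero (fun n => norm_nonneg _) bound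
  have := tendsto_pow_atTop_nhds_zero_of_lt_one (norm_nonneg q) hq
  simpa using this.mul_const (‖c‖ * C * (1 - ‖c‖)⁻¹)

lemma euler_eq {q c : ℂ} (hq : ‖q‖ < 1) (hc : ‖c‖ < 1) :
    (∑' n : ℕ, c ^ n / qp q n) = (∏' j : ℕ, (1 - c * q ^ j))⁻¹ := by
  obtain ⟨hmul, hL⟩ := prod_facts hq hc
  set E := ∑' n : ℕ, c ^ n / qp q n with hE
  set L := ∏' j : ℕ, (1 - c * q ^ j) with hLdef
  have h1 : Tendsto (fun n : ℕ => E * ∏ j ∈ Finset.range n, (1 - c * q ^ j)) atTop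
      (𝓝 (E * L)) :=
    (hmul.hasProd.tendsto_prod_nat).const_mul E
  have h2 : (fun n : ℕ => E * ∏ j ∈ Finset.range n, (1 - c * q ^ j)) =
      fun n : ℕ => ∑' k : ℕ, (q ^ n * c) ^ k / qp q k :=
    funext fun n => euler_prod_eq hq hc n
  rw [h2] at h1
  have hone : E * L = 1 := tendsto_nhds_unique h1 (euler_tendsto_one hq hc)
  exact eq_inv_of_mul_eq_one_left hone

lemma term_eq {q : ℂ} (hq : ‖q‖ < 1) (t x : ℂ) (k i : ℕ) (hik : i ≤ k) :
    t ^ k * (gaussBinom q k i * x ^ i) / qp q k =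
      ((t * x) ^ i / qp q i) * (t ^ (k - i) / qp q (k - i)) := by
  obtain ⟨m, rfl⟩ : ∃ m, k = i + m := ⟨k - i, by omega⟩
  have h := gauss_mul q (i + m) i (by omega)
  have e : i + m - i = m := by omega
  rw [e] at h ⊢
  have h1 := qp_ne_zero hq (i + m)
  have h2 := qp_ne_zero hq i
  have h3 := qp_ne_zero hq m
  rw [div_mul_div_comm, div_eq_div_iff h1 (mul_ne_zero h2 h3)]
  linear_combination (t ^ i * x ^ i * t ^ m) * h

/-- Generating function of the Rogers–Szegő polynomials:
`∑_k t^k s_k(x|q)/(q;q)_k = 1/((tx;q)_∞ (t;q)_∞)`. -/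
theorem rogersSzego_generating_function (t q x : ℂ)
    (ht : ‖t‖ < 1) (hq : ‖q‖ < 1) (htx : ‖t * x‖ < 1) :
    (∑' k : ℕ, t ^ k * rogersSzego q x k / ∏ j ∈ Finset.range k, (1 - q ^ (j + 1))) =
      ((∏' j : ℕ, (1 - t * x * q ^ j)) * ∏' j : ℕ, (1 - t * q ^ j))⁻¹ := by
  have hqp : ∀ k, (∏ j ∈ Finset.range k, (1 - q ^ (j + 1))) = qp q k := fun _ => rfl
  have hF : Summable fun i : ℕ => ‖(t * x) ^ i / qp q i‖ := euler_summable_norm hq htx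
  have hG : Summable fun j : ℕ => ‖t ^ j / qp q j‖ := euler_summable_norm hq ht
  have step1 : (∑' k : ℕ, t ^ k * rogersSzego q x k / ∏ j ∈ Finset.range k, (1 - q ^ (j + 1)))
      = ∑' k : ℕ, ∑ i ∈ Finset.range (k + 1),
          ((t * x) ^ i / qp q i) * (t ^ (k - i) / qp q (k - i)) := by
    refine tsum_congr fun k => ?_
    rw [hqp, rogersSzego, Finset.mul_sum, Finset.sum_div]
    refine Finset.sum_congr rfl fun i hi => ?_
    exact term_eq hq t x k i (by simpa using Nat.lt_succ_iff.mp (Finset.mem_range.mp hi))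
  rw [step1, ← tsum_mul_tsum_eq_tsum_sum_range_of_summable_norm hF hG,
    euler_eq hq htx, euler_eq hq ht, ← mul_inv]
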